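/- The baseline operation is idempotent: for every connected shape S, B(B(S)) = B(S); equivalently, every column and every row of B(S) has consecutive multiplicity 1, i.e., M_C(B(S), i) = 1 for all 0 ≤ i < m_C(B(S)) and M_R(B(S), i) = 1 for all 0 ≤ i < m_R(B(S)). -/

import Mathlib

/-- Minimum first coordinate of a shape (0 for the empty set). -/
def xmin (S : Finset (ℤ × ℤ)) : ℤ := WithTop.untopD 0 ((S.image Prod.fst).min)

/-- Minimum second coordinate of a shape (0 for the empty set). -/
def ymin (S : Finset (ℤ × ℤ)) : ℤ := WithTop.untopD 0 ((S.image Prod.snd).min)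

/-- East full doubling. -/
def DE (S : Finset (ℤ × ℤ)) : Finset (ℤ × ℤ) :=
  S.image (fun p => (2 * p.1 - xmin S, p.2)) ∪
    S.image (fun p => (2 * p.1 - xmin S + 1, p.2))

/-- North full doubling. -/
def DN (S : Finset (ℤ × ℤ)) : Finset (ℤ × ℤ) :=
  S.image (fun p => (p.1, 2 * p.2 - ymin S)) ∪
    S.image (fun p => (p.1, 2 * p.2 - ymin S + 1))

/-- Apply a sequence of full doubling operations (`true` = east, `false` = north),
in order (head of the list first). -/
def applySeq (σ : List Bool) (S : Finset (ℤ × ℤ)) : Finset (ℤ × ℤ) :=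
  σ.foldl (fun T b => if b then DE T else DN T) S

/-- The (p,q)-rectangle around an integer point. -/
noncomputable def Rec2 (u : ℤ × ℤ) (p q : ℕ) : Finset (ℤ × ℤ) :=
  Finset.Icc u.1 (u.1 + (p : ℤ) - 1) ×ˢ Finset.Icc u.2 (u.2 + (q : ℤ) - 1)

/-- The reconfiguration function `F_{l,k}`. -/
noncomputable def F (l k : ℕ) (S : Finset (ℤ × ℤ)) : Finset (ℤ × ℤ) :=
  S.biUnion fun p =>
    Rec2 (p.1 + ((2 : ℤ) ^ l - 1) * (p.1 - xmin S),
          p.2 + ((2 : ℤ) ^ k - 1) * (p.2 - ymin S)) (2 ^ l) (2 ^ k)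

/-- Two grid points are adjacent if they are at orthogonal distance 1. -/
def Adj (u v : ℤ × ℤ) : Prop := (u.1 - v.1).natAbs + (u.2 - v.2).natAbs = 1

/-- A shape is connected if any two of its points are joined by a path of
adjacent points inside the shape. -/
def ShapeConnected (S : Finset (ℤ × ℤ)) : Prop :=
  ∀ u ∈ S, ∀ v ∈ S,
    Relation.ReflTransGen (fun a b => a ∈ S ∧ b ∈ S ∧ Adj a b) u v

/-- `wD D x` is the number of elements of `D` strictly west of `x`. -/
def wD (D : Finset ℤ) (x : ℤ) : ℕ := (D.filter (· < x)).card

/-- East RC doubling of `S` with doubled column set `D`. -/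
def RCE (S : Finset (ℤ × ℤ)) (D : Finset ℤ) : Finset (ℤ × ℤ) :=
  S.image (fun p => (p.1 + (wD D p.1 : ℤ), p.2)) ∪
    (S.filter fun p => p.1 ∈ D).image fun p => (p.1 + (wD D p.1 : ℤ) + 1, p.2)

/-- North RC doubling of `S` with doubled row set `D`. -/
def RCN (S : Finset (ℤ × ℤ)) (D : Finset ℤ) : Finset (ℤ × ℤ) :=
  S.image (fun p => (p.1, p.2 + (wD D p.2 : ℤ))) ∪
    (S.filter fun p => p.2 ∈ D).image fun p => (p.1, p.2 + (wD D p.2 : ℤ) + 1)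

/-- `D` is an admissible doubled column set for `S`. -/
def eastAdmissible (S : Finset (ℤ × ℤ)) (D : Finset ℤ) : Prop :=
  D.Nonempty ∧ ∀ d ∈ D, ∃ y, (d, y) ∈ S

/-- `D` is an admissible doubled row set for `S`. -/
def northAdmissible (S : Finset (ℤ × ℤ)) (D : Finset ℤ) : Prop :=
  D.Nonempty ∧ ∀ d ∈ D, ∃ x, (x, d) ∈ S

/-- One east or north RC doubling step. -/
def RCStep (S T : Finset (ℤ × ℤ)) : Prop :=
  ∃ D : Finset ℤ,
    (eastAdmissible S D ∧ T = RCE S D) ∨ (northAdmissible S D ∧ T = RCN S D)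

/-- One single column or single row doubling step (an RC step with `|D| = 1`). -/
def SingleStep (S T : Finset (ℤ × ℤ)) : Prop :=
  ∃ D : Finset ℤ, D.card = 1 ∧
    ((eastAdmissible S D ∧ T = RCE S D) ∨ (northAdmissible S D ∧ T = RCN S D))

/-- Translate a shape by a vector. -/
def translateSh (v : ℤ × ℤ) (S : Finset (ℤ × ℤ)) : Finset (ℤ × ℤ) :=
  S.image fun p => (p.1 + v.1, p.2 + v.2)

/-- Single east column doubling at column `d`. -/
def oE (d : ℤ) (T : Finset (ℤ × ℤ)) : Finset (ℤ × ℤ) :=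
  (T.filter fun p => p.1 ≤ d) ∪ (T.filter fun p => d ≤ p.1).image fun p => (p.1 + 1, p.2)

/-- The column of `S` at `x`. -/
def colS (S : Finset (ℤ × ℤ)) (x : ℤ) : Finset ℤ := (S.filter fun p => p.1 = x).image Prod.snd

/-- The row of `S` at `y`. -/
def rowS (S : Finset (ℤ × ℤ)) (y : ℤ) : Finset ℤ := (S.filter fun p => p.2 = y).image Prod.fst

/-- `phiC S x` counts the column changes of `S` in the interval `(xmin S, x]`. -/
noncomputable def phiC (S : Finset (ℤ × ℤ)) (x : ℤ) : ℕ :=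
  ((Finset.Icc (xmin S + 1) x).filter fun x' => colS S x' ≠ colS S (x' - 1)).card

/-- `phiR S y` counts the row changes of `S` in the interval `(ymin S, y]`. -/
noncomputable def phiR (S : Finset (ℤ × ℤ)) (y : ℤ) : ℕ :=
  ((Finset.Icc (ymin S + 1) y).filter fun y' => rowS S y' ≠ rowS S (y' - 1)).card

/-- Column compression of a shape. -/
noncomputable def KC (S : Finset (ℤ × ℤ)) : Finset (ℤ × ℤ) := S.image fun p => ((phiC S p.1 : ℤ), p.2)

/-- Row compression of a shape. -/
noncomputable def KR (S : Finset (ℤ × ℤ)) : Finset (ℤ × ℤ) := S.image fun p => (p.1, (phiR S p.2 : ℤ))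

/-- The baseline shape of `S`. -/
noncomputable def Baseline (S : Finset (ℤ × ℤ)) : Finset (ℤ × ℤ) := KR (KC S)

/-- Number of distinct consecutive columns of `S`. -/
noncomputable def mC (S : Finset (ℤ × ℤ)) : ℕ := (S.image Prod.fst).sup (phiC S) + 1

/-- Number of distinct consecutive rows of `S`. -/
noncomputable def mR (S : Finset (ℤ × ℤ)) : ℕ := (S.image Prod.snd).sup (phiR S) + 1

/-- Consecutive multiplicity of the `i`-th distinct column of `S`. -/
noncomputable def MC (S : Finset (ℤ × ℤ)) (i : ℕ) : ℕ := ((S.image Prod.fst).filter fun x => phiC S x = i).card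

/-- Consecutive multiplicity of the `i`-th distinct row of `S`. -/
noncomputable def MR (S : Finset (ℤ × ℤ)) (i : ℕ) : ℕ := ((S.image Prod.snd).filter fun y => phiR S y = i).card

/-- The four unit directions. -/
def dirs : Finset (ℤ × ℤ) := {(1, 0), (-1, 0), (0, 1), (0, -1)}

/-- One node-addition growth step: a direction `d` is fixed and every new node is
generated at a position `p + d` for an existing node `p`. -/
def AddStep (S T : Finset (ℤ × ℤ)) : Prop :=
  ∃ d ∈ dirs, S ⊆ T ∧ T ⊆ S ∪ S.image (fun p => (p.1 + d.1, p.2 + d.2))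
open Finset

lemma mem_colS {S : Finset (ℤ × ℤ)} {x y : ℤ} : y ∈ colS S x ↔ (x, y) ∈ S := by
  simp only [colS, mem_image, mem_filter]
  constructor
  · rintro ⟨p, ⟨hp, h1⟩, h2⟩; rwa [← h1, ← h2]
  · intro h; exact ⟨(x, y), ⟨h, rfl⟩, rfl⟩

lemma mem_rowS {S : Finset (ℤ × ℤ)} {x y : ℤ} : x ∈ rowS S y ↔ (x, y) ∈ S := by
  simp only [rowS, mem_image, mem_filter]
  constructor
  · rintro ⟨p, ⟨hp, h1⟩, h2⟩; rwa [← h2, ← h1]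
  · intro h; exact ⟨(x, y), ⟨h, rfl⟩, rfl⟩

lemma xmin_le {S : Finset (ℤ × ℤ)} {p : ℤ × ℤ} (hp : p ∈ S) : xmin S ≤ p.1 := by
  have hne : (S.image Prod.fst).Nonempty := ⟨p.1, mem_image_of_mem _ hp⟩
  have h1 : xmin S = (S.image Prod.fst).min' hne := by
    rw [xmin, ← Finset.coe_min' hne]; rfl
  rw [h1]
  exact Finset.min'_le _ _ (mem_image_of_mem _ hp)

lemma xmin_mem {S : Finset (ℤ × ℤ)} (hS : S.Nonempty) : ∃ y, (xmin S, y) ∈ S := by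
  obtain ⟨p, hp⟩ := hS
  have hne : (S.image Prod.fst).Nonempty := ⟨p.1, mem_image_of_mem _ hp⟩
  have h1 : xmin S = (S.image Prod.fst).min' hne := by
    rw [xmin, ← Finset.coe_min' hne]; rfl
  have := Finset.min'_mem _ hne
  rw [← h1] at this
  simp only [mem_image] at this
  obtain ⟨q, hq, hq1⟩ := this
  exact ⟨q.2, by rwa [← hq1]⟩

lemma colS_empty_of_lt {S : Finset (ℤ × ℤ)} {z : ℤ} (h : z < xmin S) : colS S z = ∅ := by
  ext y
  simp only [mem_colS, Finset.notMem_empty, iff_false]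
  intro hy
  exact absurd (xmin_le hy) (by simpa using h)

lemma phiC_mono {S : Finset (ℤ × ℤ)} {x x' : ℤ} (h : x ≤ x') : phiC S x ≤ phiC S x' :=
  Finset.card_le_card (Finset.filter_subset_filter _ (Finset.Icc_subset_Icc_right h))

lemma phiC_of_le {S : Finset (ℤ × ℤ)} {x : ℤ} (h : x ≤ xmin S) : phiC S x = 0 := by
  rw [phiC, Finset.Icc_eq_empty (by omega), Finset.filter_empty, Finset.card_empty]

lemma phiC_succ {S : Finset (ℤ × ℤ)} {x : ℤ} (h : xmin S ≤ x) :
    phiC S (x + 1) = phiC S x + (if colS S (x + 1) = colS S x then 0 else 1) := by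
  have hI : Finset.Icc (xmin S + 1) (x + 1) = insert (x + 1) (Finset.Icc (xmin S + 1) x) := by
    ext z; simp only [Finset.mem_Icc, Finset.mem_insert]; omega
  have hs : x + 1 - 1 = x := by ring
  rw [phiC, hI, Finset.filter_insert, hs]
  by_cases hc : colS S (x + 1) = colS S x
  · rw [if_neg (by simpa using hc), if_pos hc, add_zero, phiC]
  · rw [if_pos hc, if_neg hc, Finset.card_insert_of_notMem
      (fun hm => absurd (Finset.mem_Icc.1 (Finset.mem_of_mem_filter _ hm)).2 (by omega)), phiC]
lemma col_eq_of_phi_eq {S : Finset (ℤ × ℤ)} {x x' : ℤ} (hx : xmin S ≤ x) (h : x ≤ x')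
    (hphi : phiC S x = phiC S x') : colS S x' = colS S x := by
  refine Int.le_induction (motive := fun w _ => phiC S x = phiC S w → colS S w = colS S x)
    (fun _ => rfl) ?_ x' h hphi
  intro x' hxx' ih hphi
  have h1 : phiC S x ≤ phiC S x' := phiC_mono hxx'
  have h2 : phiC S x' ≤ phiC S (x' + 1) := phiC_mono (by omega)
  have hs := phiC_succ (S := S) (x := x') (by omega)
  split_ifs at hs with hc
  · rw [hc]; exact ih (by omega)
  · omega

lemma phiC_surj {S : Finset (ℤ × ℤ)} {x' : ℤ} (hx : xmin S ≤ x') {i : ℕ}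
    (hi : i ≤ phiC S x') : ∃ z, xmin S ≤ z ∧ z ≤ x' ∧ phiC S z = i := by
  refine Int.le_induction
    (motive := fun w _ => ∀ i : ℕ, i ≤ phiC S w → ∃ z, xmin S ≤ z ∧ z ≤ w ∧ phiC S z = i)
    ?_ ?_ x' hx i hi
  · intro i hi
    rw [phiC_of_le le_rfl] at hi
    exact ⟨xmin S, le_rfl, le_rfl, by rw [phiC_of_le le_rfl]; omega⟩
  intro x' hxx' ih i hi
  have hs := phiC_succ (S := S) (x := x') hxx'
  by_cases h1 : i ≤ phiC S x'
  · obtain ⟨z, hz1, hz2, hz3⟩ := ih i h1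
    exact ⟨z, hz1, by omega, hz3⟩
  · refine ⟨x' + 1, by omega, le_rfl, ?_⟩
    split_ifs at hs <;> omega

lemma phiC_jump' {S : Finset (ℤ × ℤ)} {x' : ℤ} (hx : xmin S ≤ x') {i : ℕ}
    (hi : i + 1 ≤ phiC S x') :
    ∃ z, xmin S + 1 ≤ z ∧ z ≤ x' ∧ phiC S z = i + 1 ∧ phiC S (z - 1) = i ∧
      colS S z ≠ colS S (z - 1) := by
  refine Int.le_induction
    (motive := fun w _ => ∀ i : ℕ, i + 1 ≤ phiC S w → ∃ z, xmin S + 1 ≤ z ∧ z ≤ w ∧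
      phiC S z = i + 1 ∧ phiC S (z - 1) = i ∧ colS S z ≠ colS S (z - 1))
    ?_ ?_ x' hx i hi
  · intro i hi
    rw [phiC_of_le le_rfl] at hi
    omega
  intro x' hxx' ih i hi
  have hs := phiC_succ (S := S) (x := x') hxx'
  by_cases h1 : i + 1 ≤ phiC S x'
  · obtain ⟨z, hz1, hz2, hz3⟩ := ih i h1
    exact ⟨z, hz1, by omega, hz3⟩
  · split_ifs at hs with hc
    · omega
    · exact ⟨x' + 1, by omega, le_rfl, by omega, by
        simpa using (by omega : phiC S x' = i), by simpa using hc⟩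

/-- Connectivity gives nonempty columns between occupied ones. -/
lemma col_nonempty_between {S : Finset (ℤ × ℤ)} (hconn : ShapeConnected S)
    {u v : ℤ × ℤ} (hu : u ∈ S) (hv : v ∈ S) {z : ℤ} (h1 : u.1 ≤ z) (h2 : z ≤ v.1) :
    ∃ y, (z, y) ∈ S := by
  have hpath := hconn u hu v hv
  clear hconn
  induction hpath using Relation.ReflTransGen.head_induction_on with
  | refl => exact ⟨v.2, by have : z = v.1 := le_antisymm h2 h1; rwa [this, Prod.mk.eta]⟩
  | head hab _ ih =>
    rename_i a b _
    obtain ⟨ha, hb, hadj⟩ := hab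
    by_cases hbz : b.1 ≤ z
    · exact ih hb hbz
    · have : z = a.1 := by
        have := hadj
        unfold Adj at this
        omega
      exact ⟨a.2, by rwa [this, Prod.mk.eta]⟩
/-- Transpose of a shape. -/
def tr (S : Finset (ℤ × ℤ)) : Finset (ℤ × ℤ) := S.image Prod.swap

lemma mem_tr {S : Finset (ℤ × ℤ)} {a b : ℤ} : (a, b) ∈ tr S ↔ (b, a) ∈ S := by
  simp only [tr, mem_image, Prod.swap]
  constructor
  · rintro ⟨p, hp, h⟩
    obtain ⟨h1, h2⟩ := Prod.mk.injEq .. ▸ h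
    simpa [← h1, ← h2] using hp
  · intro h; exact ⟨(b, a), h, rfl⟩

lemma tr_tr (S : Finset (ℤ × ℤ)) : tr (tr S) = S := by
  ext ⟨a, b⟩; rw [mem_tr, mem_tr]

lemma image_fst_tr (S : Finset (ℤ × ℤ)) : (tr S).image Prod.fst = S.image Prod.snd := by
  rw [tr, Finset.image_image]; rfl

lemma image_snd_tr (S : Finset (ℤ × ℤ)) : (tr S).image Prod.snd = S.image Prod.fst := by
  rw [tr, Finset.image_image]; rfl

lemma xmin_tr (S : Finset (ℤ × ℤ)) : xmin (tr S) = ymin S := by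
  rw [xmin, ymin, image_fst_tr]

lemma ymin_tr (S : Finset (ℤ × ℤ)) : ymin (tr S) = xmin S := by
  rw [xmin, ymin, image_snd_tr]

lemma colS_tr (S : Finset (ℤ × ℤ)) (x : ℤ) : colS (tr S) x = rowS S x := by
  ext y; rw [mem_colS, mem_tr, mem_rowS]

lemma phiC_tr (S : Finset (ℤ × ℤ)) (y : ℤ) : phiC (tr S) y = phiR S y := by
  rw [phiC, phiR, xmin_tr]
  congr 1
  apply Finset.filter_congr
  intro z _
  rw [colS_tr, colS_tr]

lemma mem_KC {S : Finset (ℤ × ℤ)} {i y : ℤ} :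
    (i, y) ∈ KC S ↔ ∃ x, (x, y) ∈ S ∧ (phiC S x : ℤ) = i := by
  simp only [KC, mem_image, Prod.mk.injEq]
  constructor
  · rintro ⟨⟨a, b⟩, hp, h1, h2⟩
    simp only at h1 h2
    subst h2
    exact ⟨a, hp, h1⟩
  · rintro ⟨x, hx, h1⟩; exact ⟨(x, y), hx, h1, rfl⟩

lemma mem_KR {T : Finset (ℤ × ℤ)} {x j : ℤ} :
    (x, j) ∈ KR T ↔ ∃ y, (x, y) ∈ T ∧ (phiR T y : ℤ) = j := by
  simp only [KR, mem_image, Prod.mk.injEq]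
  constructor
  · rintro ⟨⟨a, b⟩, hp, h1, h2⟩
    simp only at h1 h2
    subst h1
    exact ⟨b, hp, h2⟩
  · rintro ⟨y, hy, h1⟩; exact ⟨(x, y), hy, rfl, h1⟩

lemma KC_tr (S : Finset (ℤ × ℤ)) : KC (tr S) = tr (KR S) := by
  ext ⟨a, b⟩
  rw [mem_tr, mem_KR, mem_KC]
  constructor
  · rintro ⟨x, hx, h⟩; exact ⟨x, mem_tr.1 hx, by rwa [phiC_tr] at h⟩
  · rintro ⟨y, hy, h⟩; exact ⟨y, mem_tr.2 hy, by rwa [phiC_tr]⟩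
/-- Every column between `xmin` and an occupied column is occupied. -/
def colFull (S : Finset (ℤ × ℤ)) : Prop :=
  ∀ p ∈ S, ∀ z : ℤ, xmin S ≤ z → z ≤ p.1 → ∃ y, (z, y) ∈ S

def rowFull (S : Finset (ℤ × ℤ)) : Prop :=
  ∀ p ∈ S, ∀ z : ℤ, ymin S ≤ z → z ≤ p.2 → ∃ x, (x, z) ∈ S

lemma colFull_tr {S : Finset (ℤ × ℤ)} (h : rowFull S) : colFull (tr S) := by
  intro p hp z h1 h2
  rw [xmin_tr] at h1
  obtain ⟨a, b⟩ := p
  rw [mem_tr] at hp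
  obtain ⟨x, hx⟩ := h (b, a) hp z h1 h2
  exact ⟨x, mem_tr.2 hx⟩

lemma colFull_of_connected {S : Finset (ℤ × ℤ)} (hS : S.Nonempty)
    (hconn : ShapeConnected S) : colFull S := by
  intro p hp z h1 h2
  obtain ⟨y0, hy0⟩ := xmin_mem hS
  exact col_nonempty_between hconn hy0 hp h1 h2

lemma rowFull_of_connected {S : Finset (ℤ × ℤ)} (hS : S.Nonempty)
    (hconn : ShapeConnected S) : rowFull S := by
  have htr : ShapeConnected (tr S) := by
    intro u hu v hv
    obtain ⟨a, b⟩ := u; obtain ⟨c, d⟩ := v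
    rw [mem_tr] at hu hv
    have := hconn _ hu _ hv
    have key : ∀ {p q : ℤ × ℤ}, Relation.ReflTransGen (fun a b => a ∈ S ∧ b ∈ S ∧ Adj a b) p q →
        Relation.ReflTransGen (fun a b => a ∈ tr S ∧ b ∈ tr S ∧ Adj a b) p.swap q.swap := by
      intro p q h
      induction h with
      | refl => exact Relation.ReflTransGen.refl
      | tail _ hbc ih =>
        obtain ⟨hb1, hb2, hadj⟩ := hbc
        refine ih.tail ⟨?_, ?_, ?_⟩
        · exact Finset.mem_image_of_mem _ hb1
        · exact Finset.mem_image_of_mem _ hb2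
        · unfold Adj at hadj ⊢
          simp only [Prod.fst_swap, Prod.snd_swap]
          omega
    exact key this
  -- now use colFull on tr S
  intro p hp z h1 h2
  have hc := colFull_of_connected (S := tr S) ⟨p.swap, by obtain ⟨a,b⟩ := p; exact mem_tr.2 hp⟩ htr
  obtain ⟨y, hy⟩ := hc p.swap (by obtain ⟨a,b⟩ := p; exact mem_tr.2 hp) z
    (by rw [xmin_tr]; exact h1) (by simpa using h2)
  exact ⟨y, mem_tr.1 hy⟩
/-- Claim A: columns of `KC S` are columns of `S`. -/
lemma colS_KC {S : Finset (ℤ × ℤ)} {x₀ y₀ : ℤ} (h : (x₀, y₀) ∈ S) :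
    colS (KC S) ((phiC S x₀ : ℤ)) = colS S x₀ := by
  ext y
  rw [mem_colS, mem_KC, mem_colS]
  constructor
  · rintro ⟨x, hx, h1⟩
    have hx0 : xmin S ≤ x₀ := xmin_le h
    have hx1 : xmin S ≤ x := xmin_le hx
    have hphi : phiC S x = phiC S x₀ := by exact_mod_cast h1
    rcases le_total x x₀ with hle | hle
    · have hc := col_eq_of_phi_eq hx1 hle hphi
      have hy : y ∈ colS S x := mem_colS.2 hx
      rw [← hc] at hy
      exact mem_colS.1 hy
    · have hc := col_eq_of_phi_eq hx0 hle hphi.symm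
      have hy : y ∈ colS S x := mem_colS.2 hx
      rw [hc] at hy
      exact mem_colS.1 hy
  · intro hy; exact ⟨x₀, hy, rfl⟩

lemma KC_nonempty {S : Finset (ℤ × ℤ)} (hS : S.Nonempty) : (KC S).Nonempty :=
  hS.image _

lemma xmin_KC {S : Finset (ℤ × ℤ)} (hS : S.Nonempty) : xmin (KC S) = 0 := by
  obtain ⟨y0, hy0⟩ := xmin_mem hS
  have h0 : ((0 : ℤ), y0) ∈ KC S := mem_KC.2 ⟨xmin S, hy0, by rw [phiC_of_le le_rfl]; rfl⟩
  have h1 : xmin (KC S) ≤ 0 := xmin_le h0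
  obtain ⟨y1, hy1⟩ := xmin_mem (KC_nonempty hS)
  obtain ⟨x, _, hx2⟩ := mem_KC.1 hy1
  omega

/-- occupied columns of `KC S` are downward closed above `0` (needs `colFull`). -/
lemma KC_occ_full {S : Finset (ℤ × ℤ)} (hfull : colFull S) {p : ℤ × ℤ} (hp : p ∈ KC S)
    {z : ℤ} (h0 : 0 ≤ z) (hz : z ≤ p.1) : ∃ y, (z, y) ∈ KC S := by
  obtain ⟨a, b⟩ := p
  obtain ⟨x, hx, hphix⟩ := mem_KC.1 hp
  have hiz : z.toNat ≤ phiC S x := by omega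
  obtain ⟨w, hw1, hw2, hw3⟩ := phiC_surj (xmin_le hx) hiz
  obtain ⟨y, hy⟩ := hfull (x, b) hx w hw1 hw2
  exact ⟨y, mem_KC.2 ⟨w, hy, by omega⟩⟩

/-- Claim B: consecutive occupied columns of `KC S` are distinct (needs `colFull`). -/
lemma KC_col_distinct {S : Finset (ℤ × ℤ)} (hfull : colFull S) {z : ℤ} (h1 : 1 ≤ z)
    (hz : ∃ y, (z, y) ∈ KC S) : colS (KC S) z ≠ colS (KC S) (z - 1) := by
  obtain ⟨y', hy'⟩ := hz
  obtain ⟨x', hx', hphix'⟩ := mem_KC.1 hy'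
  have hi : (z - 1).toNat + 1 ≤ phiC S x' := by omega
  obtain ⟨w, hw1, hw2, hw3, hw4, hw5⟩ := phiC_jump' (xmin_le hx') hi
  obtain ⟨yw, hyw⟩ := hfull (x', y') hx' w (by omega) hw2
  obtain ⟨yw', hyw'⟩ := hfull (x', y') hx' (w - 1) (by omega) (by omega)
  have e1 : colS (KC S) ((phiC S w : ℤ)) = colS S w := colS_KC hyw
  have e2 : colS (KC S) ((phiC S (w - 1) : ℤ)) = colS S (w - 1) := colS_KC hyw'
  rw [hw3] at e1
  rw [hw4] at e2
  have hz1 : (((z - 1).toNat + 1 : ℕ) : ℤ) = z := by push_cast; omega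
  have hz2 : (((z - 1).toNat : ℕ) : ℤ) = z - 1 := by omega
  rw [hz1] at e1; rw [hz2] at e2
  rw [e1, e2]
  exact hw5

/-- `KC` preserves second coordinates / rows' occupancy structure. -/
lemma mem_KC' {S : Finset (ℤ × ℤ)} {x y : ℤ} (h : (x, y) ∈ S) :
    ((phiC S x : ℤ), y) ∈ KC S := mem_KC.2 ⟨x, h, rfl⟩

lemma image_snd_KC (S : Finset (ℤ × ℤ)) : (KC S).image Prod.snd = S.image Prod.snd := by
  rw [KC, Finset.image_image]; rfl

lemma ymin_KC (S : Finset (ℤ × ℤ)) : ymin (KC S) = ymin S := by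
  rw [ymin, ymin, image_snd_KC]

lemma rowFull_KC {S : Finset (ℤ × ℤ)} (h : rowFull S) : rowFull (KC S) := by
  intro p hp z h1 h2
  obtain ⟨a, b⟩ := p
  obtain ⟨x, hx, _⟩ := mem_KC.1 hp
  rw [ymin_KC] at h1
  obtain ⟨x1, hx1⟩ := h (x, b) hx z h1 h2
  exact ⟨(phiC S x1 : ℤ), mem_KC' hx1⟩
section Normal

variable {T : Finset (ℤ × ℤ)}

/-- Hypotheses of a normalized shape. -/
lemma phi_id (hmin : xmin T = 0)
    (hfull : ∀ p ∈ T, ∀ z : ℤ, 0 ≤ z → z ≤ p.1 → ∃ y, (z, y) ∈ T)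
    (hdist : ∀ z : ℤ, 1 ≤ z → (∃ y, (z, y) ∈ T) → (∃ y, (z - 1, y) ∈ T) →
      colS T z ≠ colS T (z - 1))
    {p : ℤ × ℤ} (hp : p ∈ T) : (phiC T p.1 : ℤ) = p.1 := by
  have hx0 : 0 ≤ p.1 := hmin ▸ xmin_le hp
  have hfil : (Finset.Icc (xmin T + 1) p.1).filter
      (fun x' => colS T x' ≠ colS T (x' - 1)) = Finset.Icc (xmin T + 1) p.1 := by
    apply Finset.filter_true_of_mem
    intro z hz
    rw [Finset.mem_Icc, hmin] at hz
    exact hdist z hz.1 (hfull p hp z (by omega) hz.2) (hfull p hp (z - 1) (by omega) (by omega))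
  rw [phiC, hfil, hmin]
  rw [Int.card_Icc]
  omega

lemma KC_eq (hmin : xmin T = 0)
    (hfull : ∀ p ∈ T, ∀ z : ℤ, 0 ≤ z → z ≤ p.1 → ∃ y, (z, y) ∈ T)
    (hdist : ∀ z : ℤ, 1 ≤ z → (∃ y, (z, y) ∈ T) → (∃ y, (z - 1, y) ∈ T) →
      colS T z ≠ colS T (z - 1)) : KC T = T := by
  rw [KC]
  have : ∀ p ∈ T, (fun p : ℤ × ℤ => ((phiC T p.1 : ℤ), p.2)) p = id p := by
    intro p hp
    have := phi_id hmin hfull hdist hp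
    simp [this]
  rw [Finset.image_congr this, Finset.image_id]

lemma MC_one (hT : T.Nonempty) (hmin : xmin T = 0)
    (hfull : ∀ p ∈ T, ∀ z : ℤ, 0 ≤ z → z ≤ p.1 → ∃ y, (z, y) ∈ T)
    (hdist : ∀ z : ℤ, 1 ≤ z → (∃ y, (z, y) ∈ T) → (∃ y, (z - 1, y) ∈ T) →
      colS T z ≠ colS T (z - 1))
    {i : ℕ} (hi : i < mC T) : MC T i = 1 := by
  rw [mC] at hi
  have hi' : i ≤ (T.image Prod.fst).sup (phiC T) := by omega
  have hne : (T.image Prod.fst).Nonempty := hT.image _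
  have hocc : (i : ℤ) ∈ T.image Prod.fst := by
    obtain ⟨x, hx, hxe⟩ := Finset.exists_mem_eq_sup _ hne (phiC T)
    rw [hxe] at hi'
    simp only [Finset.mem_image] at hx
    obtain ⟨p, hp, hpx⟩ := hx
    have hpid := phi_id hmin hfull hdist hp
    rw [hpx] at hpid
    have : (i : ℤ) ≤ x := by omega
    have hx0 : (0:ℤ) ≤ i := by positivity
    obtain ⟨y, hy⟩ := hfull p hp (i : ℤ) hx0 (by omega)
    exact Finset.mem_image.2 ⟨(i, y), hy, rfl⟩
  rw [MC]
  have : (T.image Prod.fst).filter (fun x => phiC T x = i) = {(i : ℤ)} := by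
    ext x
    simp only [Finset.mem_filter, Finset.mem_singleton]
    constructor
    · rintro ⟨hx, hphi⟩
      simp only [Finset.mem_image] at hx
      obtain ⟨p, hp, hpx⟩ := hx
      have := phi_id hmin hfull hdist hp
      rw [hpx, hphi] at this
      omega
    · rintro rfl
      refine ⟨hocc, ?_⟩
      simp only [Finset.mem_image] at hocc
      obtain ⟨p, hp, hpx⟩ := hocc
      have := phi_id hmin hfull hdist hp
      rw [hpx] at this
      omega
  rw [this, Finset.card_singleton]

end Normal
lemma image_fst_KR (T : Finset (ℤ × ℤ)) : (KR T).image Prod.fst = T.image Prod.fst := by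
  rw [KR, Finset.image_image]; rfl

lemma xmin_KR (T : Finset (ℤ × ℤ)) : xmin (KR T) = xmin T := by
  rw [xmin, xmin, image_fst_KR]

lemma colS_KR (T : Finset (ℤ × ℤ)) (x : ℤ) :
    colS (KR T) x = (colS T x).image (fun y => (phiR T y : ℤ)) := by
  ext j
  simp only [mem_colS, mem_KR, Finset.mem_image, mem_colS]

lemma row_eq_of_phi_eq {T : Finset (ℤ × ℤ)} {y y' : ℤ} (hy : ymin T ≤ y) (h : y ≤ y')
    (hphi : phiR T y = phiR T y') : rowS T y' = rowS T y := by
  have := col_eq_of_phi_eq (S := tr T) (x := y) (x' := y')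
    (by rw [xmin_tr]; exact hy) h (by rw [phiC_tr, phiC_tr]; exact hphi)
  rw [colS_tr, colS_tr] at this
  exact this

/-- Row compression reflects column equality. -/
lemma colS_KR_inj {T : Finset (ℤ × ℤ)} {x x' : ℤ}
    (h : colS (KR T) x = colS (KR T) x') : colS T x = colS T x' := by
  have key : ∀ a b : ℤ, colS (KR T) a = colS (KR T) b → colS T a ⊆ colS T b := by
    intro a b hab y hy
    have h1 : (phiR T y : ℤ) ∈ colS (KR T) a := by
      rw [colS_KR]; exact Finset.mem_image_of_mem _ hy
    rw [hab, colS_KR] at h1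
    obtain ⟨y', hy', hphi⟩ := Finset.mem_image.1 h1
    have hphi' : phiR T y' = phiR T y := by exact_mod_cast hphi
    rw [mem_colS] at hy hy'
    have hymin : ymin T ≤ y := by
      have := xmin_le (S := tr T) (p := (y, a)) (mem_tr.2 hy)
      rwa [xmin_tr] at this
    have hymin' : ymin T ≤ y' := by
      have := xmin_le (S := tr T) (p := (y', b)) (mem_tr.2 hy')
      rwa [xmin_tr] at this
    rcases le_total y y' with hle | hle
    · have hrow := row_eq_of_phi_eq hymin hle hphi'.symm
      have hb : b ∈ rowS T y' := mem_rowS.2 hy'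
      rw [hrow] at hb
      exact mem_colS.2 (mem_rowS.1 hb)
    · have hrow := row_eq_of_phi_eq hymin' hle hphi'
      have hb : b ∈ rowS T y' := mem_rowS.2 hy'
      rw [← hrow] at hb
      exact mem_colS.2 (mem_rowS.1 hb)
  exact Finset.Subset.antisymm (key _ _ h) (key _ _ h.symm)
lemma exists_mem_image_fst {U : Finset (ℤ × ℤ)} {z : ℤ} :
    z ∈ U.image Prod.fst ↔ ∃ y, (z, y) ∈ U := by
  simp only [Finset.mem_image]
  constructor
  · rintro ⟨⟨a, b⟩, hp, rfl⟩; exact ⟨b, hp⟩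
  · rintro ⟨y, hy⟩; exact ⟨(z, y), hy, rfl⟩

lemma mC_tr (S : Finset (ℤ × ℤ)) : mC (tr S) = mR S := by
  rw [mC, mR, image_fst_tr]
  congr 1
  exact Finset.sup_congr rfl (fun y _ => phiC_tr S y)

lemma MC_tr (S : Finset (ℤ × ℤ)) (i : ℕ) : MC (tr S) i = MR S i := by
  rw [MC, MR, image_fst_tr]
  congr 1
  apply Finset.filter_congr
  intro y _
  rw [phiC_tr]

lemma baseline_normal_col {S : Finset (ℤ × ℤ)} (hS : S.Nonempty) (hconn : ShapeConnected S) :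
    xmin (Baseline S) = 0 ∧
    (∀ p ∈ Baseline S, ∀ z : ℤ, 0 ≤ z → z ≤ p.1 → ∃ y, (z, y) ∈ Baseline S) ∧
    (∀ z : ℤ, 1 ≤ z → (∃ y, (z, y) ∈ Baseline S) → (∃ y, (z - 1, y) ∈ Baseline S) →
      colS (Baseline S) z ≠ colS (Baseline S) (z - 1)) := by
  have hfullS := colFull_of_connected hS hconn
  set T := KC S with hT
  have hTne : T.Nonempty := KC_nonempty hS
  have hocc : ∀ z : ℤ, (∃ y, (z, y) ∈ Baseline S) ↔ (∃ y, (z, y) ∈ T) := by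
    intro z
    rw [← exists_mem_image_fst, ← exists_mem_image_fst, Baseline, image_fst_KR]
  refine ⟨?_, ?_, ?_⟩
  · rw [Baseline, xmin_KR, xmin_KC hS]
  · intro p hp z h0 hz
    have hocc1 : ∃ y, (p.1, y) ∈ T := (hocc p.1).1 ⟨p.2, by rwa [Prod.mk.eta]⟩
    obtain ⟨y1, hy1⟩ := hocc1
    have := KC_occ_full hfullS (p := (p.1, y1)) (by rwa [← hT]) h0 hz
    exact (hocc z).2 this
  · intro z h1 hz hz'
    intro heq
    have := colS_KR_inj (T := T) heq
    exact KC_col_distinct hfullS h1 ((hocc z).1 hz) this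

/-- the baseline operation is idempotent; equivalently, every column
and row of the baseline has consecutive multiplicity 1. -/
theorem baseline_idempotent (S : Finset (ℤ × ℤ)) (hS : S.Nonempty)
    (hconn : ShapeConnected S) :
    Baseline (Baseline S) = Baseline S ∧
      (∀ i < mC (Baseline S), MC (Baseline S) i = 1) ∧
      (∀ i < mR (Baseline S), MR (Baseline S) i = 1) := by
  obtain ⟨hminB, hfullB, hdistB⟩ := baseline_normal_col hS hconn
  set B := Baseline S with hB
  have hBne : B.Nonempty := ((hS.image _).image _)
  have hKCB : KC B = B := KC_eq hminB hfullB hdistB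
  have hMCB : ∀ i < mC B, MC B i = 1 := fun i hi => MC_one hBne hminB hfullB hdistB hi
  -- transpose structure: tr B = KC (tr (KC S))
  have hrowS := rowFull_of_connected hS hconn
  have hfullTrT : colFull (tr (KC S)) := colFull_tr (rowFull_KC hrowS)
  have hTrTne : (tr (KC S)).Nonempty := (KC_nonempty hS).image _
  have htrB : tr B = KC (tr (KC S)) := by
    rw [hB, Baseline, KC_tr]
  have hminTrB : xmin (tr B) = 0 := by rw [htrB, xmin_KC hTrTne]
  have hfullTrB : ∀ p ∈ tr B, ∀ z : ℤ, 0 ≤ z → z ≤ p.1 → ∃ y, (z, y) ∈ tr B := by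
    intro p hp z h0 hz
    rw [htrB] at hp ⊢
    exact KC_occ_full hfullTrT hp h0 hz
  have hdistTrB : ∀ z : ℤ, 1 ≤ z → (∃ y, (z, y) ∈ tr B) → (∃ y, (z - 1, y) ∈ tr B) →
      colS (tr B) z ≠ colS (tr B) (z - 1) := by
    intro z h1 hz _
    rw [htrB] at hz ⊢
    exact KC_col_distinct hfullTrT h1 hz
  have hKCtrB : KC (tr B) = tr B := KC_eq hminTrB hfullTrB hdistTrB
  have hTrBne : (tr B).Nonempty := hBne.image _
  have hMCtrB : ∀ i < mC (tr B), MC (tr B) i = 1 :=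
    fun i hi => MC_one hTrBne hminTrB hfullTrB hdistTrB hi
  -- KR B = B
  have hKRB : KR B = B := by
    have h1 : KC (tr B) = tr (KR B) := KC_tr B
    rw [hKCtrB] at h1
    have h2 := congrArg tr h1
    rw [tr_tr, tr_tr] at h2
    exact h2.symm
  refine ⟨?_, hMCB, ?_⟩
  · rw [Baseline, hKCB, hKRB]
  · intro i hi
    rw [← MC_tr]
    exact hMCtrB i (by rwa [mC_tr])
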